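/- Let R be a weighted polynomial ring whose weights satisfy q_i ∣ q_{i+1} for i = 1,…,n−1, and let I ⊆ R be a strongly stable ideal. Then for any i = 1,…,n and j = 1,…,l_i one has I : X_{ij}^∞ = I : (X_{11},…,X_{ij})^∞, where the variables X_{11},…,X_{ij} are all the variables preceding or equal to X_{ij} in the fixed order. -/

import Mathlib

open MvPolynomial

/-- A monomial ideal of the weighted polynomial ring (weights `w`, variables listed by
increasing weight) is *strongly stable* if for every monomial `u ∈ I` and every variable
`X t` dividing `u`, both `X s · u / X t ∈ I` for every earlier variable `X s` of the same
weight, and `v · u / X t ∈ I` for every monomial `v` of weighted degree `w t` in the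
variables of strictly smaller weight. -/
def StronglyStable {K : Type*} [Field K] {N : ℕ} (w : Fin N → ℕ)
    (I : Ideal (MvPolynomial (Fin N) K)) : Prop :=
  (∃ A : Set (Fin N →₀ ℕ),
      I = Ideal.span ((fun μ => (monomial μ (1 : K) : MvPolynomial (Fin N) K)) '' A)) ∧
  ∀ μ : Fin N →₀ ℕ, (monomial μ (1 : K) : MvPolynomial (Fin N) K) ∈ I →
    ∀ t ∈ μ.support,
      (∀ s : Fin N, s < t → w s = w t →
        (monomial (μ - Finsupp.single t 1 + Finsupp.single s 1) (1 : K) :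
          MvPolynomial (Fin N) K) ∈ I) ∧
      (∀ ν : Fin N →₀ ℕ, Finsupp.weight w ν = w t → (∀ s ∈ ν.support, w s < w t) →
        (monomial (μ - Finsupp.single t 1 + ν) (1 : K) : MvPolynomial (Fin N) K) ∈ I)

/-- divisibility along the chain of weights -/
lemma auxDvdChain {N : ℕ} {w : Fin N → ℕ}
    (hdvd : ∀ k : Fin N, ∀ h : (k : ℕ) + 1 < N, w k ∣ w ⟨(k : ℕ) + 1, h⟩)
    {u t : Fin N} (h : u ≤ t) : w u ∣ w t := by
  have key : ∀ d : ℕ, ∀ t : Fin N, (u : ℕ) + d = (t : ℕ) → w u ∣ w t := by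
    intro d
    induction d with
    | zero =>
      intro t ht
      have : u = t := Fin.ext (by omega)
      rw [← this]
    | succ d ih =>
      intro t ht
      have hlt : (u : ℕ) + d < N := by have := t.isLt; omega
      have h1 := ih ⟨(u : ℕ) + d, hlt⟩ rfl
      have h2 := hdvd ⟨(u : ℕ) + d, hlt⟩ (show (u : ℕ) + d + 1 < N by have := t.isLt; omega)
      have h3 : (⟨(u : ℕ) + d + 1, show (u : ℕ) + d + 1 < N by have := t.isLt; omega⟩ : Fin N) = t :=
        Fin.ext (by simp only [Fin.val_mk]; omega)
      exact h1.trans (h3 ▸ h2)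
  exact key ((t : ℕ) - (u : ℕ)) t (by omega)

/-- **Saturations of strongly stable ideals.**
Let `R` be a weighted polynomial ring (infinite base field of characteristic `0`, positive
weights listed in increasing order) whose weights satisfy the divisibility condition
`q_i ∣ q_{i+1}`, and let `I` be a strongly stable ideal.  Then for every variable `X t`,
`I : X t ^ ∞ = I : (X 1, …, X t)^∞`, where `X 1, …, X t` are the variables preceding or
equal to `X t`. -/
theorem saturation_strongly_stable
    (K : Type*) [Field K] [CharZero K]
    (N : ℕ) (w : Fin N → ℕ) (hpos : ∀ k, 0 < w k) (hmono : Monotone w)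
    (hdvd : ∀ k : Fin N, ∀ h : (k : ℕ) + 1 < N, w k ∣ w ⟨(k : ℕ) + 1, h⟩)
    (I : Ideal (MvPolynomial (Fin N) K)) (hI : StronglyStable w I)
    (t : Fin N) :
    (⨆ s : ℕ, I.colon (Ideal.span {(X t : MvPolynomial (Fin N) K) ^ s}))
      = ⨆ s : ℕ,
          I.colon ((Ideal.span ((fun u => (X u : MvPolynomial (Fin N) K)) '' {u | u ≤ t})) ^ s : Ideal (MvPolynomial (Fin N) K)) := by
  obtain ⟨⟨A, hA⟩, hstab⟩ := hI
  set P : (Fin N →₀ ℕ) → Prop := fun μ => (monomial μ (1 : K) : MvPolynomial (Fin N) K) ∈ I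
    with hP
  -- membership characterizations
  have hmemA : ∀ f : MvPolynomial (Fin N) K, f ∈ I ↔ ∀ μ ∈ f.support, ∃ α ∈ A, α ≤ μ := by
    intro f; rw [hA]; exact mem_ideal_span_monomial_image
  have hmon : ∀ μ : Fin N →₀ ℕ, P μ ↔ ∃ α ∈ A, α ≤ μ := by
    intro μ
    constructor
    · intro h
      refine (hmemA _).mp h μ ?_
      rw [MvPolynomial.mem_support_iff, MvPolynomial.coeff_monomial, if_pos rfl]
      exact one_ne_zero
    · intro h
      show (monomial μ (1 : K) : MvPolynomial (Fin N) K) ∈ I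
      rw [hmemA]
      intro κ hκ
      have hcoeff := MvPolynomial.mem_support_iff.mp hκ
      rw [MvPolynomial.coeff_monomial] at hcoeff
      by_cases hμκ : μ = κ
      · rw [← hμκ]; exact h
      · rw [if_neg hμκ] at hcoeff; exact absurd rfl hcoeff
  have hup : ∀ μ κ : Fin N →₀ ℕ, P μ → μ ≤ κ → P κ := by
    intro μ κ h hle
    rw [hmon] at h ⊢
    obtain ⟨α, hα, hαμ⟩ := h
    exact ⟨α, hα, hαμ.trans hle⟩
  have hfiff : ∀ f : MvPolynomial (Fin N) K, f ∈ I ↔ ∀ μ ∈ f.support, P μ := by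
    intro f
    rw [hmemA]
    exact forall₂_congr fun μ _ => (hmon μ).symm
  -- step A : exchange one X_t against (w t / w u) copies of X_u
  have stepA : ∀ σ : Fin N →₀ ℕ, P σ → ∀ u : Fin N, u < t → σ t ≠ 0 →
      P (σ - Finsupp.single t 1 + Finsupp.single u (w t / w u)) := by
    intro σ hσ u hu hσt
    obtain ⟨h1, h2⟩ := hstab σ hσ t (Finsupp.mem_support_iff.mpr hσt)
    rcases lt_or_eq_of_le (hmono hu.le) with hlt | heq
    · apply h2
      · rw [Finsupp.weight_apply, Finsupp.sum_single_index (by simp)]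
        simp only [smul_eq_mul]
        exact Nat.div_mul_cancel (auxDvdChain hdvd hu.le)
      · intro a ha
        have : a = u := Finset.mem_singleton.mp (Finsupp.support_single_subset ha)
        rw [this]; exact hlt
    · have hdd : w t / w u = 1 := by rw [heq, Nat.div_self (hpos t)]
      rw [hdd]
      exact h1 u hu heq
  -- step B : exchange all s copies of X_t against s*(w t / w u) copies of X_u
  have stepB : ∀ s : ℕ, ∀ μ : Fin N →₀ ℕ, P (μ + Finsupp.single t s) → ∀ u : Fin N, u < t →
      P (μ + Finsupp.single u (s * (w t / w u))) := by
    intro s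
    induction s with
    | zero => intro μ h u hu; simpa using h
    | succ s ih =>
      intro μ h u hu
      have hne : u ≠ t := hu.ne
      have h1 := stepA (μ + Finsupp.single t (s + 1)) h u hu (by simp)
      have e : (μ + Finsupp.single t (s + 1)) - Finsupp.single t 1
          + Finsupp.single u (w t / w u)
          = (μ + Finsupp.single u (w t / w u)) + Finsupp.single t s := by
        ext a
        simp only [Finsupp.coe_tsub, Pi.sub_apply, Finsupp.add_apply, Finsupp.single_apply]
        by_cases h1 : t = a <;> by_cases h2 : u = a <;>
          first
          | (exfalso; exact hne (h2.trans h1.symm))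
          | simp [h1, h2] <;> omega
      rw [e] at h1
      have h2 := ih (μ + Finsupp.single u (w t / w u)) h1 u hu
      have e2 : (μ + Finsupp.single u (w t / w u)) + Finsupp.single u (s * (w t / w u))
          = μ + Finsupp.single u ((s + 1) * (w t / w u)) := by
        have hr : (s + 1) * (w t / w u) = w t / w u + s * (w t / w u) := by ring
        rw [add_assoc, ← Finsupp.single_add, hr]
      rwa [e2] at h2
  -- key combinatorial lemma
  have key : ∀ s : ℕ, ∀ μ ν : Fin N →₀ ℕ, P (μ + Finsupp.single t s) →
      (∀ u ∈ ν.support, u ≤ t) →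
      s + N * (s * w t) ≤ Finsupp.weight (fun _ : Fin N => (1 : ℕ)) ν →
      P (μ + ν) := by
    intro s μ ν hPμ hsup hdeg
    by_cases hc : s ≤ ν t
    · exact hup _ _ hPμ (add_le_add_right (Finsupp.single_le_iff.mpr hc) μ)
    · push_neg at hc
      have hs1 : 1 ≤ s := by omega
      set D := ν.support.erase t with hD
      have hsub : ν.support ⊆ insert t D := by
        intro a ha
        by_cases h : a = t
        · simp [h]
        · exact Finset.mem_insert_of_mem (Finset.mem_erase.mpr ⟨h, ha⟩)
      have htot : Finsupp.weight (fun _ : Fin N => (1 : ℕ)) ν = ∑ a ∈ ν.support, ν a := by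
        rw [Finsupp.weight_apply, Finsupp.sum]
        exact Finset.sum_congr rfl fun a _ => by simp
      have hsum : ∑ a ∈ ν.support, ν a ≤ ν t + ∑ a ∈ D, ν a := by
        calc ∑ a ∈ ν.support, ν a ≤ ∑ a ∈ insert t D, ν a :=
              Finset.sum_le_sum_of_subset hsub
          _ = ν t + ∑ a ∈ D, ν a := Finset.sum_insert (Finset.notMem_erase t _)
      rw [htot] at hdeg
      have hex : ∃ u ∈ D, s * w t ≤ ν u := by
        by_contra hno
        push_neg at hno
        have hw : 1 ≤ s * w t := Nat.one_le_iff_ne_zero.mpr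
          (Nat.mul_ne_zero (by omega) (hpos t).ne')
        have hb : ∀ a ∈ D, ν a ≤ s * w t - 1 := fun a ha => by
          have := hno a ha; omega
        have h1 := Finset.sum_le_card_nsmul D (fun a => ν a) (s * w t - 1) hb
        have hcard : D.card ≤ N := le_trans (Finset.card_le_univ D) (by simp)
        have h2 : ∑ a ∈ D, ν a ≤ N * (s * w t - 1) := by
          refine le_trans h1 ?_
          rw [smul_eq_mul]
          exact Nat.mul_le_mul_right _ hcard
        have h3 : N * (s * w t - 1) ≤ N * (s * w t) :=
          Nat.mul_le_mul_left _ (Nat.sub_le _ _)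
        have h4 : N * (s * w t - 1) + N = N * (s * w t) := by
          rw [← Nat.mul_succ]
          congr 1
          omega
        have hN : 1 ≤ N := t.pos -- t : Fin N
        omega
      obtain ⟨u, huD, hνu⟩ := hex
      have hut : u < t :=
        lt_of_le_of_ne (hsup u (Finset.mem_of_mem_erase huD)) (Finset.mem_erase.mp huD).1
      have hB := stepB s μ hPμ u hut
      apply hup _ _ hB
      apply add_le_add_right
      rw [Finsupp.single_le_iff]
      exact le_trans (Nat.mul_le_mul_left s (Nat.div_le_self _ _)) hνu
  -- multiplication by a monomial
  have hmul : ∀ (g : MvPolynomial (Fin N) K) (ν : Fin N →₀ ℕ),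
      (∀ μ ∈ g.support, P (μ + ν)) → g * monomial ν (1 : K) ∈ I := by
    intro g ν hg
    have e : g * monomial ν (1 : K) = ∑ μ ∈ g.support, monomial (μ + ν) (coeff μ g) := by
      conv_lhs => rw [g.as_sum]
      rw [Finset.sum_mul]
      exact Finset.sum_congr rfl fun μ _ => by rw [monomial_mul, mul_one]
    rw [e]
    refine Ideal.sum_mem _ fun μ hμ => ?_
    have e2 : monomial (μ + ν) (coeff μ g) = C (coeff μ g) * monomial (μ + ν) (1 : K) := by
      rw [C_mul_monomial, mul_one]
    rw [e2]
    exact I.mul_mem_left _ (hg μ hμ)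
  -- the theorem
  apply le_antisymm
  · -- hard direction
    refine iSup_le fun s => le_trans ?_ (le_iSup _ (s + N * (s * w t)))
    intro f hf
    have hfI : f * X t ^ s ∈ I := Ideal.mem_colon_span_singleton.mp hf
    have hext : ∀ μ ∈ f.support, P (μ + Finsupp.single t s) := by
      intro μ hμ
      refine (hfiff _).mp hfI _ ?_
      rw [MvPolynomial.mem_support_iff, X_pow_eq_monomial, coeff_mul_monomial, mul_one]
      exact MvPolynomial.mem_support_iff.mp hμ
    rw [Submodule.mem_colon]
    intro p hp
    rw [smul_eq_mul]
    set s' := s + N * (s * w t) with hs'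
    suffices hJ : (Ideal.span ((fun u => (X u : MvPolynomial (Fin N) K)) '' {u | u ≤ t})) ^ s'
        ≤ I.colon (Ideal.span {f}) by
      have := Ideal.mem_colon_span_singleton.mp (hJ hp)
      rwa [mul_comm] at this
    rw [← Ideal.submodule_span_eq, Submodule.span_pow, Submodule.span_le]
    intro g hg
    rw [SetLike.mem_coe, Ideal.mem_colon_span_singleton]
    rw [Set.mem_pow] at hg
    obtain ⟨c, hc⟩ := hg
    choose v hvle hXv using fun i => (c i).2
    have hgX : g = ∏ i : Fin s', X (v i) := by
      rw [← hc, List.prod_ofFn]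
      exact Finset.prod_congr rfl fun i _ => (hXv i).symm
    set ν : Fin N →₀ ℕ := ∑ i : Fin s', Finsupp.single (v i) 1 with hν
    have hgm : g = monomial ν (1 : K) := by
      rw [hgX, hν, monomial_sum_one]
      exact Finset.prod_congr rfl fun i _ => by rw [X_pow_eq_monomial.symm, pow_one]
    rw [hgm, mul_comm]
    apply hmul
    intro μ hμ
    apply key s μ ν (hext μ hμ)
    · intro u hu
      obtain ⟨i, _, hi⟩ := Finsupp.mem_support_finset_sum u hu
      have := Finsupp.support_single_subset hi
      rw [Finset.mem_singleton] at this
      rw [this]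
      exact hvle i
    · have : Finsupp.weight (fun _ : Fin N => (1 : ℕ)) ν = s' := by
        rw [hν, map_sum]
        rw [Finset.sum_congr rfl fun (i : Fin s') _ => by
          rw [Finsupp.weight_apply, Finsupp.sum_single_index (by simp)]]
        simp
      rw [this]
  · -- easy direction
    refine iSup_le fun s => le_trans ?_ (le_iSup _ s)
    refine Submodule.colon_mono le_rfl ?_
    rw [SetLike.coe_subset_coe, Ideal.span_le, Set.singleton_subset_iff, SetLike.mem_coe]
    exact Ideal.pow_mem_pow (Ideal.subset_span (Set.mem_image_of_mem _ (show t ∈ {u : Fin N | u ≤ t} from le_refl t))) s
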